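/- arXiv:2006.14948 — 2 statements merged into one kernel-verified Lean document; each statement's English description precedes it below -/
import Mathlib

section
/- Let A ⊆ B be fields, let T = A + XB[X], and let f ∈ B[X] be a polynomial whose constant coefficient lies in A (so f ∈ T). Then f is irreducible in T if and only if f is irreducible in the polynomial ring B[X]. -/
/-- The composite `T = A + X B[X]` for a subfield `A` of a field `B`: the subring
(an integral domain) of the polynomial ring `B[X]` consisting of all polynomials
whose constant coefficient lies in `A`. -/
def fieldComposite (B : Type*) [Field B] (A : Subfield B) :
    Subring (Polynomial B) where
  carrier := {f | f.coeff 0 ∈ A}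
  zero_mem' := by simpa using zero_mem A
  one_mem' := by simpa using one_mem A
  add_mem' := fun hf hg => by
    simpa [Polynomial.coeff_add] using add_mem hf hg
  neg_mem' := fun hf => by
    simpa [Polynomial.coeff_neg] using neg_mem (s := A) hf
  mul_mem' := fun hf hg => by
    simpa [Polynomial.mul_coeff_zero] using mul_mem hf hg

lemma mem_fieldComposite_iff {B : Type*} [Field B] {A : Subfield B}
    {p : Polynomial B} : p ∈ fieldComposite B A ↔ p.coeff 0 ∈ A := Iff.rfl

lemma isUnit_fieldComposite_iff (B : Type*) [Field B] (A : Subfield B)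
    (u : Polynomial B) (hu : u ∈ fieldComposite B A) :
    IsUnit (⟨u, hu⟩ : fieldComposite B A) ↔ IsUnit u := by
  constructor
  · intro h
    have := h.map (fieldComposite B A).subtype
    simpa using this
  · intro h
    obtain ⟨c, hc, rfl⟩ := Polynomial.isUnit_iff.mp h
    have hcA : c ∈ A := by
      simpa using mem_fieldComposite_iff.mp hu
    have hc0 : c ≠ 0 := hc.ne_zero
    have hinv : (Polynomial.C c⁻¹) ∈ fieldComposite B A := by
      rw [mem_fieldComposite_iff]
      simpa using inv_mem (s := A) hcA
    refine IsUnit.of_mul_eq_one ⟨Polynomial.C c⁻¹, hinv⟩ ?_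
    apply Subtype.ext
    show Polynomial.C c * Polynomial.C c⁻¹ = 1
    rw [← Polynomial.C_mul, mul_inv_cancel₀ hc0, Polynomial.C_1]

/-- Let `A ⊆ B` be fields, let `T = A + X B[X]`, and let `f ∈ B[X]` be a
polynomial whose constant coefficient lies in `A` (so `f ∈ T`).  Then `f` is
irreducible in `T` if and only if `f` is irreducible in the polynomial ring `B[X]`. -/
theorem irreducible_fieldComposite_iff_irreducible (B : Type*) [Field B]
    (A : Subfield B) (f : Polynomial B) (hf : f ∈ fieldComposite B A) :
    Irreducible (⟨f, hf⟩ : fieldComposite B A) ↔ Irreducible f := by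
  constructor
  · intro hi
    refine ⟨fun h => hi.1 ((isUnit_fieldComposite_iff B A f hf).mpr h), ?_⟩
    intro g h hgh
    have key : ∀ (g₁ h₁ : Polynomial B) (hg₁ : g₁ ∈ fieldComposite B A)
        (hh₁ : h₁ ∈ fieldComposite B A), f = g₁ * h₁ → IsUnit g₁ ∨ IsUnit h₁ := by
      intro g₁ h₁ hg₁ hh₁ heq
      have := hi.2 (a := ⟨g₁, hg₁⟩) (b := ⟨h₁, hh₁⟩) (Subtype.ext heq)
      rcases this with h' | h'
      · exact Or.inl ((isUnit_fieldComposite_iff B A g₁ hg₁).mp h')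
      · exact Or.inr ((isUnit_fieldComposite_iff B A h₁ hh₁).mp h')
    by_cases hc : h.coeff 0 = 0
    · by_cases hd : g.coeff 0 = 0
      · exact key g h (mem_fieldComposite_iff.mpr (by simp [hd, zero_mem]))
          (mem_fieldComposite_iff.mpr (by simp [hc, zero_mem])) hgh
      · -- rescale by d = g.coeff 0
        set d := g.coeff 0 with hdd
        have h1 : f = (Polynomial.C d⁻¹ * g) * (Polynomial.C d * h) := by
          rw [hgh]
          calc g * h = (Polynomial.C d⁻¹ * Polynomial.C d) * (g * h) := by
                rw [← Polynomial.C_mul, inv_mul_cancel₀ hd, Polynomial.C_1, one_mul]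
            _ = (Polynomial.C d⁻¹ * g) * (Polynomial.C d * h) := by ring
        have hg1 : (Polynomial.C d⁻¹ * g) ∈ fieldComposite B A :=
          mem_fieldComposite_iff.mpr
            (by simp [Polynomial.mul_coeff_zero, ← hdd, inv_mul_cancel₀ hd, one_mem])
        have hh1 : (Polynomial.C d * h) ∈ fieldComposite B A :=
          mem_fieldComposite_iff.mpr (by simp [Polynomial.mul_coeff_zero, hc, zero_mem])
        rcases key _ _ hg1 hh1 h1 with h' | h'
        · exact Or.inl (isUnit_of_mul_isUnit_right h')
        · exact Or.inr (isUnit_of_mul_isUnit_right h')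
    · -- rescale by c = h.coeff 0
      set c := h.coeff 0 with hcc
      have h1 : f = (Polynomial.C c * g) * (Polynomial.C c⁻¹ * h) := by
        rw [hgh]
        calc g * h = (Polynomial.C c * Polynomial.C c⁻¹) * (g * h) := by
              rw [← Polynomial.C_mul, mul_inv_cancel₀ hc, Polynomial.C_1, one_mul]
          _ = (Polynomial.C c * g) * (Polynomial.C c⁻¹ * h) := by ring
      have hg1 : (Polynomial.C c * g) ∈ fieldComposite B A := by
        rw [mem_fieldComposite_iff]
        have h0 : f.coeff 0 = g.coeff 0 * h.coeff 0 := by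
          rw [hgh, Polynomial.mul_coeff_zero]
        have : c * g.coeff 0 ∈ A := by
          rw [mul_comm, ← h0]; exact hf
        simpa [Polynomial.mul_coeff_zero] using this
      have hh1 : (Polynomial.C c⁻¹ * h) ∈ fieldComposite B A :=
        mem_fieldComposite_iff.mpr
          (by simp [Polynomial.mul_coeff_zero, ← hcc, inv_mul_cancel₀ hc, one_mem])
      rcases key _ _ hg1 hh1 h1 with h' | h'
      · exact Or.inl (isUnit_of_mul_isUnit_right h')
      · exact Or.inr (isUnit_of_mul_isUnit_right h')
  · intro hi
    refine ⟨fun h => hi.1 ((isUnit_fieldComposite_iff B A f hf).mp h), ?_⟩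
    rintro ⟨a, ha⟩ ⟨b, hb⟩ hab
    have hab' : f = a * b := by
      have := congrArg (Subtype.val) hab
      simpa using this
    rcases hi.2 (a := a) (b := b) hab' with h' | h'
    · exact Or.inl ((isUnit_fieldComposite_iff B A a ha).mpr h')
    · exact Or.inr ((isUnit_fieldComposite_iff B A b hb).mpr h')
end

section
/- Let A ⊊ B be fields with A ≠ B and let T = A + XB[X]. Then T is not a GCD-domain: there exist two elements of T (for instance X² and bX² for any b ∈ B ∖ A) which have no greatest common divisor in T, i.e., no common divisor of the two elements is divisible by every common divisor of them. -/
open Polynomial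

lemma mem_fieldComposite {B : Type*} [Field B] {A : Subfield B} {f : Polynomial B} :
    f ∈ fieldComposite B A ↔ f.coeff 0 ∈ A := Iff.rfl

/-- Let `A ⊊ B` be fields with `A ≠ B` and let `T = A + X B[X]`.  Then
`T` is not a GCD-domain: there exist two elements of `T` which have no greatest common
divisor in `T`, i.e. no common divisor of the two elements is divisible by every
common divisor of them. -/
theorem fieldComposite_not_gcd_domain (B : Type*) [Field B] (A : Subfield B)
    (hA : A ≠ ⊤) :
    ∃ f g : fieldComposite B A,
      ¬ ∃ d : fieldComposite B A,
        d ∣ f ∧ d ∣ g ∧ ∀ e : fieldComposite B A, e ∣ f → e ∣ g → e ∣ d := by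
  classical
  obtain ⟨b, hb⟩ : ∃ b : B, b ∉ A := by
    by_contra h
    push_neg at h
    exact hA (eq_top_iff.mpr fun x _ => h x)
  have hb0 : b ≠ 0 := fun h0 => hb (h0 ▸ A.zero_mem)
  have hfmem : (X : Polynomial B) ^ 2 ∈ fieldComposite B A := by
    simpa [mem_fieldComposite, coeff_X_pow] using A.zero_mem
  have hgmem : (C b * X ^ 2 : Polynomial B) ∈ fieldComposite B A := by
    simpa [mem_fieldComposite, coeff_X_pow] using A.zero_mem
  refine ⟨⟨X ^ 2, hfmem⟩, ⟨C b * X ^ 2, hgmem⟩, ?_⟩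
  rintro ⟨d, hdf, hdg, hgreat⟩
  -- For every nonzero c, the element cX is a common divisor of X² and bX².
  have key : ∀ c : B, c ≠ 0 → ∃ r : Polynomial B, r.coeff 0 ∈ A ∧
      (d : Polynomial B) = C c * X * r := by
    intro c hc
    have hmem : (C c * X : Polynomial B) ∈ fieldComposite B A := by
      simpa [mem_fieldComposite] using A.zero_mem
    have h1 : (⟨C c * X, hmem⟩ : fieldComposite B A) ∣ ⟨X ^ 2, hfmem⟩ := by
      refine ⟨⟨C c⁻¹ * X, by simpa [mem_fieldComposite] using A.zero_mem⟩, Subtype.ext ?_⟩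
      push_cast
      rw [mul_mul_mul_comm, ← C_mul, mul_inv_cancel₀ hc, map_one, one_mul, sq]
    have h2 : (⟨C c * X, hmem⟩ : fieldComposite B A) ∣ ⟨C b * X ^ 2, hgmem⟩ := by
      refine ⟨⟨C (c⁻¹ * b) * X, by simpa [mem_fieldComposite] using A.zero_mem⟩, Subtype.ext ?_⟩
      push_cast
      rw [mul_mul_mul_comm, ← C_mul, mul_inv_cancel_left₀ hc, sq]
    obtain ⟨r, hr⟩ := hgreat _ h1 h2
    rw [Subtype.ext_iff] at hr
    push_cast at hr
    exact ⟨(r : Polynomial B), r.2, hr⟩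
  -- coefficient extraction: d.coeff 1 = c * r.coeff 0
  have coeff1 : ∀ c : B, c ≠ 0 → ∀ r : Polynomial B,
      (d : Polynomial B) = C c * X * r → (d : Polynomial B).coeff 1 = c * r.coeff 0 := by
    intro c hc r hr
    rw [hr, mul_assoc, coeff_C_mul, coeff_X_mul]
  by_cases hd1 : (d : Polynomial B).coeff 1 = 0
  · -- d has coeff 0 and coeff 1 zero, so X² ∣ d; combined with d ∣ X² we get a contradiction.
    obtain ⟨r, hrA, hr⟩ := key 1 one_ne_zero
    have hd0 : (d : Polynomial B).coeff 0 = 0 := by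
      rw [hr]; simp
    obtain ⟨h, hh⟩ : (X : Polynomial B) ^ 2 ∣ (d : Polynomial B) := by
      rw [X_pow_dvd_iff]
      intro m hm
      interval_cases m
      · exact hd0
      · exact hd1
    obtain ⟨s, hs⟩ := hdf
    obtain ⟨s', hs'⟩ := hdg
    rw [Subtype.ext_iff] at hs hs'
    push_cast at hs hs'
    have hX2 : (X : Polynomial B) ^ 2 ≠ 0 := pow_ne_zero _ X_ne_zero
    have hhs : h * (s : Polynomial B) = 1 := by
      apply mul_left_cancel₀ hX2
      rw [mul_one, ← mul_assoc, ← hh, ← hs]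
    have hhs' : h * (s' : Polynomial B) = C b := by
      apply mul_left_cancel₀ hX2
      rw [← mul_assoc, ← hh, ← hs', mul_comm (C b)]
    have hseq : (s' : Polynomial B) = (s : Polynomial B) * C b := by
      calc (s' : Polynomial B) = (h * s) * s' := by rw [hhs, one_mul]
        _ = (s : Polynomial B) * (h * s') := by ring
        _ = (s : Polynomial B) * C b := by rw [hhs']
    have hs0 : (s : Polynomial B).coeff 0 ≠ 0 := by
      intro h0
      have := congrArg (fun p => Polynomial.coeff p 0) hhs
      simp [mul_coeff_zero, h0] at this
    have hs'0 : (s' : Polynomial B).coeff 0 = (s : Polynomial B).coeff 0 * b := by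
      rw [hseq, mul_coeff_zero, coeff_C]
      simp
    have hbA : b ∈ A := by
      have h1 : (s : Polynomial B).coeff 0 ∈ A := s.2
      have h2 : (s' : Polynomial B).coeff 0 ∈ A := s'.2
      have : ((s : Polynomial B).coeff 0)⁻¹ * ((s : Polynomial B).coeff 0 * b) = b := by
        field_simp
      rw [← this]
      exact A.mul_mem (A.inv_mem h1) (hs'0 ▸ h2)
    exact hb hbA
  · -- d.coeff 1 = t ≠ 0; take c = t / b, then r.coeff 0 = b ∈ A, contradiction.
    set t := (d : Polynomial B).coeff 1 with ht
    have hc : t * b⁻¹ ≠ 0 := mul_ne_zero hd1 (inv_ne_zero hb0)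
    obtain ⟨r, hrA, hr⟩ := key (t * b⁻¹) hc
    have := coeff1 _ hc _ hr
    have hr0 : r.coeff 0 = b := by
      have : t = t * b⁻¹ * r.coeff 0 := this
      field_simp at this
      exact this.symm
    exact hb (hr0 ▸ hrA)
end
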